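/- Let Λ be a Hermitian operator on ℂ^{d_A} ⊗ ℂ^{d_B} with Λ^Γ = Λ and Tr|Λ| ≤ 1, and let H be Hermitian with H + H^Γ = Λ. Define H' = (1/2)(H ⊗ Λ + Λ ⊗ H) on the doubled bipartite system (with Γ acting on both B factors). Then H' + H'^Γ = Λ ⊗ Λ and Tr|H'| ≤ Tr|H|. -/

import Mathlib

open Matrix Kronecker ComplexOrder
open scoped InnerProductSpace
set_option linter.unusedSectionVars false
set_option linter.unusedTactic false
set_option maxHeartbeats 1000000

/-- Partial transposition on the second tensor factor. -/
def ptrans {a b : Type*} (M : Matrix (a × b) (a × b) ℂ) : Matrix (a × b) (a × b) ℂ :=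
  fun p q => M (p.1, q.2) (q.1, p.2)

/-- Partial transposition of both B factors on the doubled bipartite system. -/
def ptrans2 {a b : Type*}
    (M : Matrix ((a × b) × (a × b)) ((a × b) × (a × b)) ℂ) :
    Matrix ((a × b) × (a × b)) ((a × b) × (a × b)) ℂ :=
  fun p q => M ((p.1.1, q.1.2), (p.2.1, q.2.2)) ((q.1.1, p.1.2), (q.2.1, p.2.2))

/-- The trace norm Tr|H| = Tr √(Hᴴ H). -/
noncomputable def trN {n : Type*} [Fintype n] [DecidableEq n] (H : Matrix n n ℂ) : ℝ :=
  (((Matrix.posSemidef_conjTranspose_mul_self H).1.eigenvectorUnitary.1 *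
      diagonal (((↑) : ℝ → ℂ) ∘ (√·) ∘ (Matrix.posSemidef_conjTranspose_mul_self H).1.eigenvalues) *
      (star (Matrix.posSemidef_conjTranspose_mul_self H).1.eigenvectorUnitary : Matrix n n ℂ)).trace).re

noncomputable def Matrix.PosSemidef.sqrt {n : Type*} [Fintype n] [DecidableEq n] {A : Matrix n n ℂ}
    (hA : A.PosSemidef) : Matrix n n ℂ :=
  hA.1.eigenvectorUnitary.1 * diagonal (((↑) : ℝ → ℂ) ∘ (√·) ∘ hA.1.eigenvalues) *
    (star hA.1.eigenvectorUnitary : Matrix n n ℂ)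

section sq
open scoped MatrixOrder
variable {n : Type*} [Fintype n] [DecidableEq n]

lemma Matrix.PosSemidef.sqrt_eq_cfc {A : Matrix n n ℂ} (hA : A.PosSemidef) :
    hA.sqrt = CFC.sqrt A := by
  rw [CFC.sqrt_eq_cfc, cfc_nnreal_eq_real _ A, hA.1.cfc_eq]
  simp only [IsHermitian.cfc, Matrix.PosSemidef.sqrt, Unitary.conjStarAlgAut_apply]
  congr 3
  funext i
  simp [max_eq_left (hA.eigenvalues_nonneg i)]

lemma Matrix.PosSemidef.posSemidef_sqrt {A : Matrix n n ℂ} (hA : A.PosSemidef) :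
    hA.sqrt.PosSemidef := by
  rw [hA.sqrt_eq_cfc]; exact (CFC.sqrt_nonneg A).posSemidef

lemma Matrix.PosSemidef.sq_sqrt {A : Matrix n n ℂ} (hA : A.PosSemidef) :
    hA.sqrt ^ 2 = A := by
  rw [hA.sqrt_eq_cfc]; exact CFC.sq_sqrt A hA.nonneg

lemma Matrix.PosSemidef.eq_sqrt_of_sq_eq {B : Matrix n n ℂ} (hB : B.PosSemidef)
    {A : Matrix n n ℂ} (hA : A.PosSemidef) (h : B ^ 2 = A) : B = hA.sqrt := by
  rw [hA.sqrt_eq_cfc]; exact (CFC.sqrt_unique (by rw [← sq, h]) hB.nonneg).symm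
end sq


lemma trN_def {n : Type*} [Fintype n] [DecidableEq n] (H : Matrix n n ℂ) :
    trN H = ((Matrix.posSemidef_conjTranspose_mul_self H).sqrt.trace).re := rfl

section aux
variable {n m : Type*} [Fintype n] [DecidableEq n] [Fintype m] [DecidableEq m]

lemma kron_conjTranspose (A : Matrix n n ℂ) (B : Matrix m m ℂ) :
    (A ⊗ₖ B)ᴴ = Aᴴ ⊗ₖ Bᴴ := by
  ext ⟨i, j⟩ ⟨k, l⟩
  simp [conjTranspose_apply, kroneckerMap_apply]

lemma psd_smul {A : Matrix n n ℂ} (hA : A.PosSemidef) {c : ℝ} (hc : 0 ≤ c) :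
    ((c : ℂ) • A).PosSemidef := by
  exact hA.smul (a := (c : ℂ)) (by exact_mod_cast hc)

lemma psd_kron {A : Matrix n n ℂ} {B : Matrix m m ℂ} (hA : A.PosSemidef) (hB : B.PosSemidef) :
    (A ⊗ₖ B).PosSemidef := by
  exact hA.kronecker hB

lemma trace_sqrt_eq3 {A : Matrix n n ℂ} (hA : A.PosSemidef) :
    hA.sqrt.trace = ((∑ i, Real.sqrt (hA.1.eigenvalues i) : ℝ) : ℂ) := by
  unfold Matrix.PosSemidef.sqrt
  rw [Matrix.trace_mul_cycle, Unitary.coe_star_mul_self, one_mul, Matrix.trace_diagonal]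
  push_cast
  rfl

lemma trace_re_sqrt {A : Matrix n n ℂ} (hA : A.PosSemidef) : (hA.sqrt.trace).re = ∑ i, Real.sqrt (hA.1.eigenvalues i) := by
  rw [trace_sqrt_eq3, Complex.ofReal_re]

lemma trN_nonneg (M : Matrix n n ℂ) : 0 ≤ trN M := by
  rw [trN_def, trace_re_sqrt]
  exact Finset.sum_nonneg fun i _ => Real.sqrt_nonneg _

lemma trN_smul_half (M : Matrix n n ℂ) : trN ((2 : ℂ)⁻¹ • M) = 2⁻¹ * trN M := by
  set S := (Matrix.posSemidef_conjTranspose_mul_self M).sqrt with hSdef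
  have hS : S.PosSemidef := (Matrix.posSemidef_conjTranspose_mul_self M).posSemidef_sqrt
  have hS2 : ((2 : ℂ)⁻¹ • S).PosSemidef := by
    have := psd_smul hS (c := 2⁻¹) (by norm_num)
    simpa using this
  have hsq : ((2 : ℂ)⁻¹ • S) ^ 2 = ((2 : ℂ)⁻¹ • M)ᴴ * ((2 : ℂ)⁻¹ • M) := by
    rw [smul_pow, conjTranspose_smul, smul_mul_smul_comm]
    have h2 : S ^ 2 = Mᴴ * M := (Matrix.posSemidef_conjTranspose_mul_self M).sq_sqrt
    rw [h2]
    norm_num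
  have := hS2.eq_sqrt_of_sq_eq (Matrix.posSemidef_conjTranspose_mul_self ((2 : ℂ)⁻¹ • M)) hsq
  rw [trN_def, ← this, Matrix.trace_smul]
  rw [trN_def]
  simp [← hSdef]

lemma trN_kron (A : Matrix n n ℂ) (B : Matrix m m ℂ) :
    trN (A ⊗ₖ B) = trN A * trN B := by
  set SA := (Matrix.posSemidef_conjTranspose_mul_self A).sqrt with hSA
  set SB := (Matrix.posSemidef_conjTranspose_mul_self B).sqrt with hSB
  have hA := (Matrix.posSemidef_conjTranspose_mul_self A).posSemidef_sqrt
  have hB := (Matrix.posSemidef_conjTranspose_mul_self B).posSemidef_sqrt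
  have hk : (SA ⊗ₖ SB).PosSemidef := psd_kron hA hB
  have hsq : (SA ⊗ₖ SB) ^ 2 = (A ⊗ₖ B)ᴴ * (A ⊗ₖ B) := by
    rw [sq, ← Matrix.mul_kronecker_mul, ← sq, ← sq,
      (Matrix.posSemidef_conjTranspose_mul_self A).sq_sqrt,
      (Matrix.posSemidef_conjTranspose_mul_self B).sq_sqrt,
      kron_conjTranspose, ← Matrix.mul_kronecker_mul]
  have heq := hk.eq_sqrt_of_sq_eq (Matrix.posSemidef_conjTranspose_mul_self (A ⊗ₖ B)) hsq
  rw [trN_def, ← heq, Matrix.trace_kronecker, trN_def, trN_def,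
    trace_sqrt_eq3 (Matrix.posSemidef_conjTranspose_mul_self A),
    trace_sqrt_eq3 (Matrix.posSemidef_conjTranspose_mul_self B)]
  rw [← Complex.ofReal_mul]
  simp

variable {n : Type*} [Fintype n] [DecidableEq n]

lemma trace_sqrt_eq {A : Matrix n n ℂ} (hA : A.PosSemidef) :
    hA.sqrt.trace = ((∑ i, Real.sqrt (hA.1.eigenvalues i) : ℝ) : ℂ) := by
  unfold Matrix.PosSemidef.sqrt
  rw [Matrix.trace_mul_cycle, Unitary.coe_star_mul_self, one_mul, Matrix.trace_diagonal]
  push_cast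
  rfl

lemma trN_eq_sum (M : Matrix n n ℂ) :
    trN M = ∑ i, Real.sqrt ((Matrix.isHermitian_conjTranspose_mul_self M).eigenvalues i) := by
  rw [trN_def]
  rw [trace_sqrt_eq, Complex.ofReal_re]

lemma toEuclideanLin_mul (A B : Matrix n n ℂ) :
    Matrix.toEuclideanLin (A * B) = (Matrix.toEuclideanLin A) ∘ₗ (Matrix.toEuclideanLin B) := by
  ext x
  simp [Matrix.toEuclideanLin_apply, Matrix.mulVec_mulVec]

lemma inner_toEuclidean_self (M : Matrix n n ℂ) (x : EuclideanSpace ℂ n) :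
    ⟪M.toEuclideanLin x, M.toEuclideanLin x⟫_ℂ = ⟪x, (Mᴴ * M).toEuclideanLin x⟫_ℂ := by
  rw [toEuclideanLin_mul, LinearMap.comp_apply, Matrix.toEuclideanLin_conjTranspose_eq_adjoint,
    LinearMap.adjoint_inner_right]

lemma eigen_euclidean (M : Matrix n n ℂ) (k : n) :
    (Mᴴ * M).toEuclideanLin ((Matrix.isHermitian_conjTranspose_mul_self M).eigenvectorBasis k)
      = ((Matrix.isHermitian_conjTranspose_mul_self M).eigenvalues k : ℂ) •
        (Matrix.isHermitian_conjTranspose_mul_self M).eigenvectorBasis k := by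
  set hM := Matrix.isHermitian_conjTranspose_mul_self M
  have h := hM.mulVec_eigenvectorBasis k
  apply (WithLp.equiv 2 (n → ℂ)).injective
  simp only [WithLp.equiv_apply, Matrix.ofLp_toEuclideanLin_apply]
  ext j
  have := congrFun h j
  simpa [Complex.real_smul] using this

lemma norm_toEuclidean_eigen (M : Matrix n n ℂ) (k : n) :
    ‖M.toEuclideanLin ((Matrix.isHermitian_conjTranspose_mul_self M).eigenvectorBasis k)‖
      = Real.sqrt ((Matrix.isHermitian_conjTranspose_mul_self M).eigenvalues k) := by
  set hM := Matrix.isHermitian_conjTranspose_mul_self M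
  set w := hM.eigenvectorBasis k with hw
  have h1 : ⟪M.toEuclideanLin w, M.toEuclideanLin w⟫_ℂ = (hM.eigenvalues k : ℂ) := by
    rw [inner_toEuclidean_self, eigen_euclidean, inner_smul_right]
    have : ⟪w, w⟫_ℂ = 1 := by
      have := hM.eigenvectorBasis.orthonormal.1 k
      rw [@inner_self_eq_norm_sq_to_K ℂ, this]
      norm_num
    rw [this, mul_one]
  have h2 : (‖M.toEuclideanLin w‖ ^ 2 : ℂ) = (hM.eigenvalues k : ℂ) := by
    rw [← h1, @inner_self_eq_norm_sq_to_K ℂ]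
    norm_num
  have h3 : ‖M.toEuclideanLin w‖ ^ 2 = hM.eigenvalues k := by
    exact_mod_cast h2
  rw [← h3, Real.sqrt_sq (norm_nonneg _)]

lemma sum_inner_le_trN {ι : Type*} [Fintype ι] (M : Matrix n n ℂ)
    (u v : ι → EuclideanSpace ℂ n)
    (hu : ∀ x : EuclideanSpace ℂ n, ∑ i, ‖⟪u i, x⟫_ℂ‖ ^ 2 ≤ ‖x‖ ^ 2)
    (hv : ∀ x : EuclideanSpace ℂ n, ∑ i, ‖⟪v i, x⟫_ℂ‖ ^ 2 ≤ ‖x‖ ^ 2) :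
    ∑ i, ‖⟪u i, M.toEuclideanLin (v i)⟫_ℂ‖ ≤ trN M := by
  classical
  set hM := Matrix.isHermitian_conjTranspose_mul_self M with hhM
  set d := hM.eigenvalues with hd
  set w := hM.eigenvectorBasis with hww
  have hdpos : ∀ k, 0 ≤ d k := Matrix.eigenvalues_conjTranspose_mul_self_nonneg M
  have hexp : ∀ i, ⟪u i, M.toEuclideanLin (v i)⟫_ℂ
      = ∑ k, ⟪w k, v i⟫_ℂ * ⟪u i, M.toEuclideanLin (w k)⟫_ℂ := by
    intro i
    conv_lhs => rw [← w.sum_repr' (v i)]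
    rw [map_sum, inner_sum]
    congr 1
    ext k
    rw [_root_.map_smul, inner_smul_right]
  calc ∑ i, ‖⟪u i, M.toEuclideanLin (v i)⟫_ℂ‖
      ≤ ∑ i, ∑ k, ‖⟪w k, v i⟫_ℂ‖ * ‖⟪u i, M.toEuclideanLin (w k)⟫_ℂ‖ := by
        apply Finset.sum_le_sum
        intro i _
        rw [hexp i]
        refine (norm_sum_le _ _).trans ?_
        apply Finset.sum_le_sum
        intro k _
        rw [norm_mul]
    _ = ∑ k, ∑ i, ‖⟪w k, v i⟫_ℂ‖ * ‖⟪u i, M.toEuclideanLin (w k)⟫_ℂ‖ := Finset.sum_comm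
    _ ≤ ∑ k, Real.sqrt (d k) := by
        apply Finset.sum_le_sum
        intro k _
        have hf : ∑ i, ‖⟪w k, v i⟫_ℂ‖ ^ 2 ≤ 1 := by
          calc ∑ i, ‖⟪w k, v i⟫_ℂ‖ ^ 2 = ∑ i, ‖⟪v i, w k⟫_ℂ‖ ^ 2 := by
                simp_rw [norm_inner_symm]
            _ ≤ ‖w k‖ ^ 2 := hv (w k)
            _ = 1 := by rw [w.orthonormal.1 k]; norm_num
        have hg : ∑ i, ‖⟪u i, M.toEuclideanLin (w k)⟫_ℂ‖ ^ 2 ≤ d k := by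
          refine (hu _).trans ?_
          rw [hww, hd, norm_toEuclidean_eigen, Real.sq_sqrt (hdpos k)]
        have hcs := Finset.sum_mul_sq_le_sq_mul_sq Finset.univ
          (fun i => ‖⟪w k, v i⟫_ℂ‖) (fun i => ‖⟪u i, M.toEuclideanLin (w k)⟫_ℂ‖)
        have hnn : 0 ≤ ∑ i, ‖⟪w k, v i⟫_ℂ‖ * ‖⟪u i, M.toEuclideanLin (w k)⟫_ℂ‖ :=
          Finset.sum_nonneg fun i _ => mul_nonneg (norm_nonneg _) (norm_nonneg _)
        have hsq : (∑ i, ‖⟪w k, v i⟫_ℂ‖ * ‖⟪u i, M.toEuclideanLin (w k)⟫_ℂ‖) ^ 2 ≤ d k := by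
          refine hcs.trans ?_
          calc (∑ i, ‖⟪w k, v i⟫_ℂ‖ ^ 2) * ∑ i, ‖⟪u i, M.toEuclideanLin (w k)⟫_ℂ‖ ^ 2
              ≤ 1 * d k := by
                apply mul_le_mul hf hg
                  (Finset.sum_nonneg fun i _ => sq_nonneg _) zero_le_one
            _ = d k := one_mul _
        exact (Real.le_sqrt hnn (hdpos k)).mpr hsq
    _ = trN M := (trN_eq_sum M).symm

lemma inner_toEuclidean_pair (M : Matrix n n ℂ) (x y : EuclideanSpace ℂ n) :
    ⟪M.toEuclideanLin x, M.toEuclideanLin y⟫_ℂ = ⟪x, (Mᴴ * M).toEuclideanLin y⟫_ℂ := by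
  rw [toEuclideanLin_mul, LinearMap.comp_apply, Matrix.toEuclideanLin_conjTranspose_eq_adjoint,
    LinearMap.adjoint_inner_right]

-- Bessel for families that are "orthonormal except for zero vectors"
lemma bessel_zeros {ι : Type*} [Fintype ι] (u : ι → EuclideanSpace ℂ n)
    (horth : ∀ i j, i ≠ j → ⟪u i, u j⟫_ℂ = 0)
    (hn : ∀ i, u i = 0 ∨ ‖u i‖ = 1) (x : EuclideanSpace ℂ n) :
    ∑ i, ‖⟪u i, x⟫_ℂ‖ ^ 2 ≤ ‖x‖ ^ 2 := by
  classical
  have horthn : Orthonormal ℂ (fun i : {j : ι // u j ≠ 0} => u i) := by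
    rw [orthonormal_iff_ite]
    rintro ⟨i, hi⟩ ⟨j, hj⟩
    by_cases hij : i = j
    · subst hij
      simp only [Subtype.mk.injEq, if_pos rfl]
      rw [inner_self_eq_norm_sq_to_K]
      rcases hn i with h | h
      · exact absurd h hi
      · rw [h]; norm_num
    · have : (⟨i, hi⟩ : {j : ι // u j ≠ 0}) ≠ ⟨j, hj⟩ := by simpa using hij
      rw [if_neg this]
      exact horth i j hij
  have key := horthn.sum_inner_products_le (s := Finset.univ) x
  have h1 : ∑ i, ‖⟪u i, x⟫_ℂ‖ ^ 2
      = ∑ i ∈ Finset.univ.filter (fun j => u j ≠ 0), ‖⟪u i, x⟫_ℂ‖ ^ 2 := by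
    refine (Finset.sum_filter_of_ne ?_).symm
    intro i _ h hzero
    apply h
    rw [hzero, inner_zero_left]
    norm_num
  rw [h1]
  calc ∑ i ∈ Finset.univ.filter (fun j => u j ≠ 0), ‖⟪u i, x⟫_ℂ‖ ^ 2
      = ∑ i : {j : ι // u j ≠ 0}, ‖⟪u i.1, x⟫_ℂ‖ ^ 2 :=
        Finset.sum_subtype (p := fun j => u j ≠ 0) _ (by simp) (fun j => ‖⟪u j, x⟫_ℂ‖ ^ 2)
    _ ≤ ‖x‖ ^ 2 := key

lemma trN_add_le (A B : Matrix n n ℂ) : trN (A + B) ≤ trN A + trN B := by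
  classical
  set M := A + B with hMdef
  set hM := Matrix.isHermitian_conjTranspose_mul_self M with hhM
  set e := hM.eigenvalues with he
  set v := hM.eigenvectorBasis with hv
  have hepos : ∀ k, 0 ≤ e k := Matrix.eigenvalues_conjTranspose_mul_self_nonneg M
  have hMv : ∀ i j, ⟪M.toEuclideanLin (v i), M.toEuclideanLin (v j)⟫_ℂ
      = if i = j then (e i : ℂ) else 0 := by
    intro i j
    rw [inner_toEuclidean_pair, hv, hhM, eigen_euclidean, inner_smul_right,
      orthonormal_iff_ite.mp (Matrix.isHermitian_conjTranspose_mul_self M).eigenvectorBasis.orthonormal]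
    by_cases hij : i = j
    · subst hij; simp [he]
    · simp [hij]
  set u : n → EuclideanSpace ℂ n :=
    fun i => ((Real.sqrt (e i) : ℂ))⁻¹ • M.toEuclideanLin (v i) with hu
  have hMv0 : ∀ i, e i = 0 → M.toEuclideanLin (v i) = 0 := by
    intro i h0
    have := hMv i i
    rw [if_pos rfl, h0] at this
    rw [Complex.ofReal_zero] at this
    exact inner_self_eq_zero.mp this
  have huv : ∀ i j, ⟪u i, u j⟫_ℂ = if i = j then (if e i = 0 then 0 else 1) else 0 := by
    intro i j
    rw [hu]
    simp only [inner_smul_left, inner_smul_right, map_inv₀, Complex.conj_ofReal]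
    rw [hMv i j]
    by_cases hij : i = j
    · subst hij
      by_cases h0 : e i = 0
      · simp [h0]
      · rw [if_pos rfl, if_pos rfl, if_neg h0]
        have hs : (Real.sqrt (e i) : ℂ) ≠ 0 := by
          simpa using Real.sqrt_ne_zero'.mpr (lt_of_le_of_ne (hepos i) (Ne.symm h0))
        field_simp
        rw [← Complex.ofReal_pow, Real.sq_sqrt (hepos i)]
    · simp [hij]
  have horth : ∀ i j, i ≠ j → ⟪u i, u j⟫_ℂ = 0 := by
    intro i j hij; rw [huv, if_neg hij]
  have hn : ∀ i, u i = 0 ∨ ‖u i‖ = 1 := by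
    intro i
    by_cases h0 : e i = 0
    · left; rw [hu]; simp [hMv0 i h0]
    · right
      have := huv i i
      rw [if_pos rfl, if_neg h0, inner_self_eq_norm_sq_to_K] at this
      have h2 : ‖u i‖ ^ 2 = 1 := by
        rw [← RCLike.ofReal_pow, show (1 : ℂ) = ((1 : ℝ) : ℂ) by norm_num] at this
        exact RCLike.ofReal_inj.mp this
      nlinarith [norm_nonneg (u i)]
  have hkey : ∀ i, ⟪u i, M.toEuclideanLin (v i)⟫_ℂ = (Real.sqrt (e i) : ℂ) := by
    intro i
    rw [hu]
    simp only [inner_smul_left, map_inv₀, Complex.conj_ofReal]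
    rw [hMv i i, if_pos rfl]
    by_cases h0 : e i = 0
    · simp [h0]
    · have hs : (Real.sqrt (e i) : ℂ) ≠ 0 := by
        simpa using Real.sqrt_ne_zero'.mpr (lt_of_le_of_ne (hepos i) (Ne.symm h0))
      rw [show ((e i : ℝ) : ℂ) = (Real.sqrt (e i) : ℂ) * (Real.sqrt (e i) : ℂ) by
        rw [← Complex.ofReal_mul, Real.mul_self_sqrt (hepos i)]]
      rw [inv_mul_cancel_left₀ hs]
  have hre : trN M = ∑ i, (⟪u i, M.toEuclideanLin (v i)⟫_ℂ).re := by
    rw [trN_eq_sum]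
    refine Finset.sum_congr rfl fun i _ => ?_
    rw [hkey i, Complex.ofReal_re]
  have hsplit : ∀ i, M.toEuclideanLin (v i) = A.toEuclideanLin (v i) + B.toEuclideanLin (v i) := by
    intro i
    rw [hMdef, map_add, LinearMap.add_apply]
  calc trN M = ∑ i, (⟪u i, M.toEuclideanLin (v i)⟫_ℂ).re := hre
    _ = (∑ i, (⟪u i, A.toEuclideanLin (v i)⟫_ℂ).re)
        + ∑ i, (⟪u i, B.toEuclideanLin (v i)⟫_ℂ).re := by
        rw [← Finset.sum_add_distrib]
        refine Finset.sum_congr rfl fun i _ => ?_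
        rw [hsplit i, inner_add_right, Complex.add_re]
    _ ≤ (∑ i, ‖⟪u i, A.toEuclideanLin (v i)⟫_ℂ‖)
        + ∑ i, ‖⟪u i, B.toEuclideanLin (v i)⟫_ℂ‖ := by
        gcongr with i _ i _ <;> exact Complex.re_le_norm _
    _ ≤ trN A + trN B := by
        have hbu := bessel_zeros u horth hn
        have hbv : ∀ x : EuclideanSpace ℂ n, ∑ i, ‖⟪v i, x⟫_ℂ‖ ^ 2 ≤ ‖x‖ ^ 2 :=
          fun x => v.orthonormal.sum_inner_products_le x
        exact add_le_add (sum_inner_le_trN A u v hbu hbv) (sum_inner_le_trN B u v hbu hbv)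


end aux

section alg

variable {a b : Type*}

lemma ptrans_add (X Y : Matrix (a × b) (a × b) ℂ) :
    ptrans (X + Y) = ptrans X + ptrans Y := rfl

lemma ptrans2_add (X Y : Matrix ((a × b) × (a × b)) ((a × b) × (a × b)) ℂ) :
    ptrans2 (X + Y) = ptrans2 X + ptrans2 Y := rfl

lemma ptrans2_smul (c : ℂ) (X : Matrix ((a × b) × (a × b)) ((a × b) × (a × b)) ℂ) :
    ptrans2 (c • X) = c • ptrans2 X := rfl

lemma ptrans2_kron (X Y : Matrix (a × b) (a × b) ℂ) :
    ptrans2 (X ⊗ₖ Y) = (ptrans X) ⊗ₖ (ptrans Y) := rfl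

end alg

theorem doubling_bound {a b : Type*} [Fintype a] [Fintype b] [DecidableEq a] [DecidableEq b]
    (Λ H : Matrix (a × b) (a × b) ℂ)
    (hΛ : Λ.IsHermitian) (hH : H.IsHermitian)
    (hΛpt : ptrans Λ = Λ) (hΛtn : trN Λ ≤ 1)
    (hHΛ : H + ptrans H = Λ)
    (H' : Matrix ((a × b) × (a × b)) ((a × b) × (a × b)) ℂ)
    (hH' : H' = (2 : ℂ)⁻¹ • (H ⊗ₖ Λ + Λ ⊗ₖ H)) :
    H' + ptrans2 H' = Λ ⊗ₖ Λ ∧ trN H' ≤ trN H := by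
  constructor
  · rw [hH', ptrans2_smul, ptrans2_add, ptrans2_kron, ptrans2_kron, hΛpt, ← smul_add]
    have : H ⊗ₖ Λ + Λ ⊗ₖ H + (ptrans H ⊗ₖ Λ + Λ ⊗ₖ ptrans H)
        = (H + ptrans H) ⊗ₖ Λ + Λ ⊗ₖ (H + ptrans H) := by
      rw [Matrix.add_kronecker, Matrix.kronecker_add]
      abel
    rw [this, hHΛ, ← two_smul ℂ (Λ ⊗ₖ Λ), smul_smul]
    norm_num
  · have h1 : trN H' = 2⁻¹ * trN (H ⊗ₖ Λ + Λ ⊗ₖ H) := by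
      rw [hH', trN_smul_half]
    have h2 : trN (H ⊗ₖ Λ + Λ ⊗ₖ H) ≤ trN (H ⊗ₖ Λ) + trN (Λ ⊗ₖ H) := trN_add_le _ _
    have h3 : trN (H ⊗ₖ Λ) = trN H * trN Λ := trN_kron _ _
    have h4 : trN (Λ ⊗ₖ H) = trN Λ * trN H := trN_kron _ _
    have h5 : trN H' ≤ trN H * trN Λ := by
      rw [h1]
      calc 2⁻¹ * trN (H ⊗ₖ Λ + Λ ⊗ₖ H) ≤ 2⁻¹ * (trN (H ⊗ₖ Λ) + trN (Λ ⊗ₖ H)) := by linarith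
        _ = trN H * trN Λ := by rw [h3, h4]; ring
    calc trN H' ≤ trN H * trN Λ := h5
      _ ≤ trN H * 1 := by
          have := trN_nonneg H
          have := trN_nonneg Λ
          nlinarith
      _ = trN H := mul_one _
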